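/- arXiv:1810.07147 — 2 statements merged into one kernel-verified Lean document; each statement's English description precedes it below -/
import Mathlib

section
/- (Feasibility of the true parameters for the JNE constraints). Let p, n be positive integers, δ > 0, C_M > 0, C_R > 0. Let Σ¹,…,Σⁿ be invertible real p×p matrices, and for each i suppose (Σᶦ)⁻¹ = M + Rᶦ where M and the Rᶦ are p×p matrices with ‖M‖_{L1} ≤ C_M and ‖Rᶦ‖_{L1} ≤ C_R. Let S¹,…,Sⁿ be p×p matrices with |Sᶦ − Σᶦ|_∞ ≤ δ for every i. Then for every i = 1,…,n, |I − Sᶦ(M + Rᶦ)|_∞ ≤ (C_M + C_R) δ; in particular, if additionally Σ_{i=1}^n Rᶦ = 0, then (M, R¹,…,Rⁿ) satisfies the JNE constraints with λ = (C_M + C_R) δ. -/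
open Finset Matrix

/-- Entrywise `ℓ∞` norm of a matrix: the maximum absolute value of its entries. -/
noncomputable def supAbs {p : ℕ} (A : Matrix (Fin p) (Fin p) ℝ) : ℝ :=
  ⨆ i, ⨆ j, |A i j|

/-- The `L1` matrix norm: the maximum over columns of the sum of the absolute values
of the entries in that column. -/
noncomputable def colL1 {p : ℕ} (A : Matrix (Fin p) (Fin p) ℝ) : ℝ :=
  ⨆ j, ∑ i, |A i j|

/-- The JNE feasibility constraints: `|Sᶦ (M + Rᶦ) - I|_∞ ≤ λ` for all `i`, and
`∑ᵢ Rᶦ = 0`. -/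
def JNEFeasible {p n : ℕ} (S : Fin n → Matrix (Fin p) (Fin p) ℝ) (lam : ℝ)
    (M : Matrix (Fin p) (Fin p) ℝ) (R : Fin n → Matrix (Fin p) (Fin p) ℝ) : Prop :=
  (∀ i, supAbs (S i * (M + R i) - 1) ≤ lam) ∧ ∑ i, R i = 0


lemma supAbs_le_iff {p : ℕ} (hp : 0 < p) (A : Matrix (Fin p) (Fin p) ℝ) (c : ℝ) :
    supAbs A ≤ c ↔ ∀ i j, |A i j| ≤ c := by
  have : Nonempty (Fin p) := ⟨⟨0, hp⟩⟩
  unfold supAbs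
  constructor
  · intro h i j
    refine le_trans ?_ h
    have h1 : |A i j| ≤ ⨆ j, |A i j| :=
      le_ciSup (Set.Finite.bddAbove (Set.finite_range fun j => |A i j|)) j
    have h2 : (⨆ j, |A i j|) ≤ ⨆ i, ⨆ j, |A i j| :=
      le_ciSup (Set.Finite.bddAbove (Set.finite_range fun i => ⨆ j, |A i j|)) i
    exact le_trans h1 h2
  · intro h
    exact ciSup_le fun i => ciSup_le fun j => h i j

lemma col_le_colL1 {p : ℕ} (A : Matrix (Fin p) (Fin p) ℝ) (j : Fin p) :
    ∑ i, |A i j| ≤ colL1 A :=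
  le_ciSup (Set.Finite.bddAbove (Set.finite_range fun j => ∑ i, |A i j|)) j

/-- **Feasibility of the true parameters for the JNE constraints.**
If each `Σᶦ` is invertible with `(Σᶦ)⁻¹ = M + Rᶦ`, `‖M‖_{L1} ≤ C_M`, `‖Rᶦ‖_{L1} ≤ C_R`,
and `|Sᶦ - Σᶦ|_∞ ≤ δ`, then `|I - Sᶦ (M + Rᶦ)|_∞ ≤ (C_M + C_R) δ` for every `i`; in
particular, if `∑ᵢ Rᶦ = 0` then `(M, R¹, …, Rⁿ)` satisfies the JNE constraints with
`λ = (C_M + C_R) δ`. -/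
theorem true_params_feasible {p n : ℕ} (hp : 0 < p) (hn : 0 < n)
    (δ CM CR : ℝ) (hδ : 0 < δ) (hCM : 0 < CM) (hCR : 0 < CR)
    (Sig : Fin n → Matrix (Fin p) (Fin p) ℝ)
    (hSigUnit : ∀ i, IsUnit (Sig i))
    (M : Matrix (Fin p) (Fin p) ℝ) (R : Fin n → Matrix (Fin p) (Fin p) ℝ)
    (hinv : ∀ i, (Sig i)⁻¹ = M + R i)
    (hM : colL1 M ≤ CM) (hR : ∀ i, colL1 (R i) ≤ CR)
    (S : Fin n → Matrix (Fin p) (Fin p) ℝ)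
    (hS : ∀ i, supAbs (S i - Sig i) ≤ δ) :
    (∀ i, supAbs (1 - S i * (M + R i)) ≤ (CM + CR) * δ) ∧
      (∑ i, R i = 0 → JNEFeasible S ((CM + CR) * δ) M R) := by
  constructor
  · intro i
    have hmul : Sig i * (M + R i) = 1 := by
      rw [← hinv i]
      exact Matrix.mul_nonsing_inv _ ((Matrix.isUnit_iff_isUnit_det _).mp (hSigUnit i))
    have hd : (1 : Matrix (Fin p) (Fin p) ℝ) - S i * (M + R i)
        = (Sig i - S i) * (M + R i) := by
      rw [Matrix.sub_mul, hmul]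
    rw [hd, supAbs_le_iff hp]
    intro j k
    have hE : ∀ a b, |(Sig i - S i) a b| ≤ δ := by
      intro a b
      have := (supAbs_le_iff hp (S i - Sig i) δ).mp (hS i) a b
      simpa [abs_sub_comm, Matrix.sub_apply] using this
    calc |((Sig i - S i) * (M + R i)) j k|
        = |∑ l, (Sig i - S i) j l * (M + R i) l k| := by rw [Matrix.mul_apply]
      _ ≤ ∑ l, |(Sig i - S i) j l * (M + R i) l k| := Finset.abs_sum_le_sum_abs _ _
      _ ≤ ∑ l, δ * |(M + R i) l k| := by
          refine Finset.sum_le_sum fun l _ => ?_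
          rw [abs_mul]
          exact mul_le_mul_of_nonneg_right (hE j l) (abs_nonneg _)
      _ = δ * ∑ l, |(M + R i) l k| := by rw [Finset.mul_sum]
      _ ≤ δ * (CM + CR) := by
          refine mul_le_mul_of_nonneg_left ?_ hδ.le
          calc ∑ l, |(M + R i) l k| ≤ ∑ l, (|M l k| + |R i l k|) := by
                refine Finset.sum_le_sum fun l _ => ?_
                simpa [Matrix.add_apply] using abs_add_le (M l k) (R i l k)
            _ = (∑ l, |M l k|) + ∑ l, |R i l k| := Finset.sum_add_distrib
            _ ≤ CM + CR := add_le_add (le_trans (col_le_colL1 M k) hM)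
                (le_trans (col_le_colL1 (R i) k) (hR i))
      _ = (CM + CR) * δ := mul_comm _ _
  · intro hsum
    refine ⟨fun i => ?_, hsum⟩
    have hmul : Sig i * (M + R i) = 1 := by
      rw [← hinv i]
      exact Matrix.mul_nonsing_inv _ ((Matrix.isUnit_iff_isUnit_det _).mp (hSigUnit i))
    have hd : S i * (M + R i) - 1 = (S i - Sig i) * (M + R i) := by
      rw [Matrix.sub_mul, hmul]
    rw [hd, supAbs_le_iff hp]
    intro j k
    have hE : ∀ a b, |(S i - Sig i) a b| ≤ δ := (supAbs_le_iff hp _ _).mp (hS i)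
    calc |((S i - Sig i) * (M + R i)) j k|
        = |∑ l, (S i - Sig i) j l * (M + R i) l k| := by rw [Matrix.mul_apply]
      _ ≤ ∑ l, |(S i - Sig i) j l * (M + R i) l k| := Finset.abs_sum_le_sum_abs _ _
      _ ≤ ∑ l, δ * |(M + R i) l k| := by
          refine Finset.sum_le_sum fun l _ => ?_
          rw [abs_mul]
          exact mul_le_mul_of_nonneg_right (hE j l) (abs_nonneg _)
      _ = δ * ∑ l, |(M + R i) l k| := by rw [Finset.mul_sum]
      _ ≤ δ * (CM + CR) := by
          refine mul_le_mul_of_nonneg_left ?_ hδ.le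
          calc ∑ l, |(M + R i) l k| ≤ ∑ l, (|M l k| + |R i l k|) := by
                refine Finset.sum_le_sum fun l _ => ?_
                simpa [Matrix.add_apply] using abs_add_le (M l k) (R i l k)
            _ = (∑ l, |M l k|) + ∑ l, |R i l k| := Finset.sum_add_distrib
            _ ≤ CM + CR := add_le_add (le_trans (col_le_colL1 M k) hM)
                (le_trans (col_le_colL1 (R i) k) (hR i))
      _ = (CM + CR) * δ := mul_comm _ _
end

section
/- (Objective bound at any JNE minimizer). Let p, n be positive integers, δ > 0, C_M > 0, C_R > 0, and λ = (C_M + C_R) δ. Let Σ¹,…,Σⁿ be invertible real p×p matrices with (Σᶦ)⁻¹ = M + Rᶦ, where ‖M‖_{L1} ≤ C_M, ‖Rᶦ‖_{L1} ≤ C_R and Σ_{i=1}^n Rᶦ = 0, and let S¹,…,Sⁿ satisfy |Sᶦ − Σᶦ|_∞ ≤ δ for every i. Then any minimizer (Ω̂, R̂¹,…,R̂ⁿ) of the JNE optimization problem with data S¹,…,Sⁿ and tuning parameter λ satisfies ‖Ω̂‖_{L1} + (1/n) Σ_{i=1}^n ‖R̂ᶦ‖_{L1} ≤ C_M + C_R;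 in particular, for every column index j, |Ω̂_{*j}|₁ + (1/n) Σ_{i=1}^n |R̂ᶦ_{*j}|₁ ≤ C_M + C_R. -/
open Finset Matrix

/-- The `ℓ1` norm of a vector. -/
noncomputable def vecL1 {p : ℕ} (v : Fin p → ℝ) : ℝ := ∑ i, |v i|

/-- The JNE objective `‖M‖_{L1} + (1/n) ∑ᵢ ‖Rᶦ‖_{L1}`. -/
noncomputable def JNEObjective {p n : ℕ} (M : Matrix (Fin p) (Fin p) ℝ)
    (R : Fin n → Matrix (Fin p) (Fin p) ℝ) : ℝ :=
  colL1 M + (1 / (n : ℝ)) * ∑ i, colL1 (R i)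

/-- `(Ω̂, R̂¹, …, R̂ⁿ)` is a joint nonparametric estimator: a feasible minimizer of the
JNE objective. -/
def IsJNE {p n : ℕ} (S : Fin n → Matrix (Fin p) (Fin p) ℝ) (lam : ℝ)
    (Ohat : Matrix (Fin p) (Fin p) ℝ) (Rhat : Fin n → Matrix (Fin p) (Fin p) ℝ) : Prop :=
  JNEFeasible S lam Ohat Rhat ∧
    ∀ M R, JNEFeasible S lam M R → JNEObjective Ohat Rhat ≤ JNEObjective M R

lemma abs_le_supAbs {p : ℕ} (A : Matrix (Fin p) (Fin p) ℝ) (i j : Fin p) :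
    |A i j| ≤ supAbs A := by
  have h1 : |A i j| ≤ ⨆ k, |A i k| :=
    le_ciSup (f := fun k => |A i k|) (Set.Finite.bddAbove (Set.finite_range _)) j
  exact h1.trans (le_ciSup (f := fun i => ⨆ k, |A i k|) (Set.Finite.bddAbove (Set.finite_range _)) i)

lemma supAbs_nonneg {p : ℕ} (hp : 0 < p) (A : Matrix (Fin p) (Fin p) ℝ) :
    0 ≤ supAbs A := by
  have := abs_le_supAbs A ⟨0, hp⟩ ⟨0, hp⟩
  exact (abs_nonneg _).trans this

lemma colL1_le {p : ℕ} (hp : 0 < p) (A : Matrix (Fin p) (Fin p) ℝ) (c : ℝ)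
    (h : ∀ j, ∑ i, |A i j| ≤ c) : colL1 A ≤ c := by
  haveI : Nonempty (Fin p) := ⟨⟨0, hp⟩⟩
  exact ciSup_le h

lemma supAbs_mul_le {p : ℕ} (hp : 0 < p) (A B : Matrix (Fin p) (Fin p) ℝ) :
    supAbs (A * B) ≤ supAbs A * colL1 B := by
  haveI : Nonempty (Fin p) := ⟨⟨0, hp⟩⟩
  refine ciSup_le fun i => ciSup_le fun j => ?_
  have h1 : |(A * B) i j| ≤ ∑ k, |A i k| * |B k j| := by
    rw [Matrix.mul_apply]
    refine (Finset.abs_sum_le_sum_abs _ _).trans ?_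
    simp [abs_mul]
  refine h1.trans ?_
  have h2 : ∑ k, |A i k| * |B k j| ≤ ∑ k, supAbs A * |B k j| := by
    refine Finset.sum_le_sum fun k _ => ?_
    exact mul_le_mul_of_nonneg_right (abs_le_supAbs A i k) (abs_nonneg _)
  refine h2.trans ?_
  rw [← Finset.mul_sum]
  exact mul_le_mul_of_nonneg_left (col_le_colL1 B j) (supAbs_nonneg hp A)

/-- **Objective bound at any JNE minimizer.**
If the true parameters `(M, R¹, …, Rⁿ)` are feasible (which follows from
`(Σᶦ)⁻¹ = M + Rᶦ`, `|Sᶦ - Σᶦ|_∞ ≤ δ` and `λ = (C_M + C_R) δ`), then any JNE minimizer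
`(Ω̂, R̂¹, …, R̂ⁿ)` satisfies `‖Ω̂‖_{L1} + (1/n) ∑ᵢ ‖R̂ᶦ‖_{L1} ≤ C_M + C_R`, and in
particular every column satisfies `|Ω̂_{*j}|₁ + (1/n) ∑ᵢ |R̂ᶦ_{*j}|₁ ≤ C_M + C_R`. -/
theorem objective_bound_at_minimizer {p n : ℕ} (hp : 0 < p) (hn : 0 < n)
    (δ CM CR lam : ℝ) (hδ : 0 < δ) (hCM : 0 < CM) (hCR : 0 < CR)
    (hlam : lam = (CM + CR) * δ)
    (Sig : Fin n → Matrix (Fin p) (Fin p) ℝ)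
    (hSigUnit : ∀ i, IsUnit (Sig i))
    (M : Matrix (Fin p) (Fin p) ℝ) (R : Fin n → Matrix (Fin p) (Fin p) ℝ)
    (hinv : ∀ i, (Sig i)⁻¹ = M + R i)
    (hM : colL1 M ≤ CM) (hR : ∀ i, colL1 (R i) ≤ CR)
    (hRsum : ∑ i, R i = 0)
    (S : Fin n → Matrix (Fin p) (Fin p) ℝ)
    (hS : ∀ i, supAbs (S i - Sig i) ≤ δ)
    (Ohat : Matrix (Fin p) (Fin p) ℝ) (Rhat : Fin n → Matrix (Fin p) (Fin p) ℝ)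
    (hJNE : IsJNE S lam Ohat Rhat) :
    JNEObjective Ohat Rhat ≤ CM + CR ∧
      ∀ j : Fin p,
        vecL1 (fun a => Ohat a j) + (1 / (n : ℝ)) * ∑ i, vecL1 (fun a => Rhat i a j)
          ≤ CM + CR := by
  haveI : Nonempty (Fin p) := ⟨⟨0, hp⟩⟩
  have hn' : (0:ℝ) < n := by exact_mod_cast hn
  -- feasibility of the truth
  have hfeas : JNEFeasible S lam M R := by
    refine ⟨fun i => ?_, hRsum⟩
    have hone : Sig i * (M + R i) = 1 := by
      rw [← hinv i]
      exact Matrix.mul_nonsing_inv _ ((Matrix.isUnit_iff_isUnit_det _).mp (hSigUnit i))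
    have heq : S i * (M + R i) - 1 = (S i - Sig i) * (M + R i) := by
      rw [Matrix.sub_mul, hone]
    rw [heq]
    calc supAbs ((S i - Sig i) * (M + R i))
        ≤ supAbs (S i - Sig i) * colL1 (M + R i) := supAbs_mul_le hp _ _
      _ ≤ δ * (CM + CR) := by
          refine mul_le_mul (hS i) ?_ ?_ hδ.le
          · refine colL1_le hp _ _ fun j => ?_
            calc ∑ a, |(M + R i) a j| ≤ ∑ a, (|M a j| + |R i a j|) :=
                  Finset.sum_le_sum fun a _ => abs_add_le _ _
              _ = (∑ a, |M a j|) + ∑ a, |R i a j| := Finset.sum_add_distrib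
              _ ≤ CM + CR := add_le_add ((col_le_colL1 M j).trans hM)
                  ((col_le_colL1 (R i) j).trans (hR i))
          · have := col_le_colL1 (M + R i) ⟨0, hp⟩
            refine le_trans ?_ this
            positivity
      _ = lam := by rw [hlam]; ring
  have hobj : JNEObjective Ohat Rhat ≤ CM + CR := by
    refine (hJNE.2 M R hfeas).trans ?_
    unfold JNEObjective
    have hsum : ∑ i, colL1 (R i) ≤ n * CR := by
      calc ∑ i, colL1 (R i) ≤ ∑ _i : Fin n, CR := Finset.sum_le_sum fun i _ => hR i
        _ = n * CR := by simp [mul_comm]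
    calc colL1 M + (1 / (n:ℝ)) * ∑ i, colL1 (R i)
        ≤ CM + (1 / (n:ℝ)) * (n * CR) := by
          refine add_le_add hM (mul_le_mul_of_nonneg_left hsum ?_)
          positivity
      _ = CM + CR := by field_simp
  refine ⟨hobj, fun j => ?_⟩
  refine le_trans ?_ hobj
  unfold JNEObjective vecL1
  refine add_le_add (col_le_colL1 Ohat j) (mul_le_mul_of_nonneg_left
    (Finset.sum_le_sum fun i _ => col_le_colL1 (Rhat i) j) ?_)
  positivity
end
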